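/- Let H_0 = (S,T;F_0) be a simple bigraph with bipartite complement G_0, r_S the rank function of a matroid on S, p_T a positively intersecting supermodular set-function on T, and m_V = (m_S, m_T) a degree-specification with m̃_S(S) = m̃_T(T) = γ satisfying Condition (★). Then the maximum of ∑_{V' ∈ 𝓘} p_1(V') over all ST-independent families 𝓘 of subsets of V equals γ. -/

import Mathlib

open Finset

variable {α : Type*} [DecidableEq α]

/-- The number of edges of the bigraph with edge set `E` connecting `X ⊆ S` and `Y ⊆ T`. -/
def edgesBetween (E : Finset (α × α)) (X Y : Finset α) : ℕ :=
  (E.filter (fun e => e.1 ∈ X ∧ e.2 ∈ Y)).card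

/-- The set of neighbours (in `S`) of a subset `Z ⊆ T` in the bigraph with edge set `E`. -/
def nbrs (E : Finset (α × α)) (Z : Finset α) : Finset α :=
  (E.filter (fun e => e.2 ∈ Z)).image Prod.fst

/-- The degree of a node `v ∈ S` in the bigraph with edge set `E`. -/
def degS (E : Finset (α × α)) (v : α) : ℕ := (E.filter (fun e => e.1 = v)).card

/-- The degree of a node `v ∈ T` in the bigraph with edge set `E`. -/
def degT (E : Finset (α × α)) (v : α) : ℕ := (E.filter (fun e => e.2 = v)).card

/-- `r` is the rank function of a matroid on the ground set `S`. -/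
def IsRankFn (S : Finset α) (r : Finset α → ℕ) : Prop :=
  (∀ X, X ⊆ S → r X ≤ X.card) ∧
  (∀ X Y, X ⊆ Y → Y ⊆ S → r X ≤ r Y) ∧
  (∀ X Y, X ⊆ S → Y ⊆ S → r (X ∪ Y) + r (X ∩ Y) ≤ r X + r Y)

/-- `V' ∈ ℋ₀`: no arc of the orientation of `H₀` (from `S` to `T`) enters `V'`. -/
def memH₀ (F₀ : Finset (α × α)) (V' : Finset α) : Prop :=
  ∀ e ∈ F₀, e.2 ∈ V' → e.1 ∈ V'

instance (F₀ : Finset (α × α)) (V' : Finset α) : Decidable (memH₀ F₀ V') := by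
  unfold memH₀; infer_instance

/-- The set-function `p₀` of the paper:
`p₀(V') = max{p_T({y}) − r_S(X), m_T(y) − |X| + d_{H₀}(y)}` if `V' = X ∪ {y} ∈ ℋ₀`
with `X ⊆ S`, `y ∈ T`; `p₀(V') = p_T(Y) − r_S(X)` if `V' = X ∪ Y ∈ ℋ₀` with `X ⊆ S`,
`Y ⊆ T`, `|Y| ≥ 2`; and `p₀(V') = 0` otherwise. -/
def p₀ (S T : Finset α) (F₀ : Finset (α × α)) (rS : Finset α → ℕ)
    (pT : Finset α → ℤ) (m : α → ℤ) (V' : Finset α) : ℤ :=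
  if V' ⊆ S ∪ T ∧ memH₀ F₀ V' then
    if (V' ∩ T).card = 1 then
      max (pT (V' ∩ T) - (rS (V' ∩ S) : ℤ))
        ((∑ y ∈ V' ∩ T, m y) - ((V' ∩ S).card : ℤ) + ∑ y ∈ V' ∩ T, (degT F₀ y : ℤ))
    else if 2 ≤ (V' ∩ T).card then pT (V' ∩ T) - (rS (V' ∩ S) : ℤ)
    else 0
  else 0

/-- `V_s = {v ∈ V − s : sv ∉ F₀}`. -/
def Vs (S T : Finset α) (F₀ : Finset (α × α)) (s : α) : Finset α :=
  ((S ∪ T).erase s).filter (fun v => (s, v) ∉ F₀)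

/-- The set-function `p₁` of the paper: `p₁(V_s) = m_S(s)` for `s ∈ S`
(such an `s` is unique when it exists), and `p₁(V') = p₀(V')` otherwise. -/
def p₁ (S T : Finset α) (F₀ : Finset (α × α)) (rS : Finset α → ℕ)
    (pT : Finset α → ℤ) (m : α → ℤ) (V' : Finset α) : ℤ :=
  if ∃ s ∈ S, V' = Vs S T F₀ s then
    ∑ s ∈ S.filter (fun s => V' = Vs S T F₀ s), m s
  else p₀ S T F₀ rS pT m V'

/-- Condition (★) of the paper: for every `Y ⊆ T`, `X ⊆ S` and every subpartition
`𝒯 = {T₁, …, T_q}` of `T − Y` into nonempty sets,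
`m̃(X) + m̃(Y) − d_{G₀}(X,Y) + ∑ᵢ (p_T(Tᵢ) − r_S(X ∪ Γ_{H₀}(Tᵢ))) ≤ γ`,
where `G₀ = (S ×ˢ T) \ F₀` is the bipartite complement of `H₀`. -/
def StarCond (S T : Finset α) (F₀ : Finset (α × α)) (rS : Finset α → ℕ)
    (pT : Finset α → ℤ) (m : α → ℤ) (γ : ℤ) : Prop :=
  ∀ X ⊆ S, ∀ Y ⊆ T, ∀ 𝒯 : Finset (Finset α),
    (∀ Ti ∈ 𝒯, Ti.Nonempty ∧ Ti ⊆ T \ Y) →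
    (∀ T₁ ∈ 𝒯, ∀ T₂ ∈ 𝒯, T₁ ≠ T₂ → Disjoint T₁ T₂) →
    (∑ v ∈ X, m v) + (∑ v ∈ Y, m v)
        - (edgesBetween ((S ×ˢ T) \ F₀) X Y : ℤ)
        + ∑ Ti ∈ 𝒯, (pT Ti - (rS (X ∪ nbrs F₀ Ti) : ℤ)) ≤ γ

section AuxHelpers

variable {S T : Finset α} {F₀ : Finset (α × α)} {rS : Finset α → ℕ}
  {pT : Finset α → ℤ} {m : α → ℤ} {γ : ℤ}

lemma mem_Vs {s v : α} : v ∈ Vs S T F₀ s ↔ v ∈ S ∪ T ∧ v ≠ s ∧ (s, v) ∉ F₀ := by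
  unfold Vs; simp only [Finset.mem_filter, Finset.mem_erase]; tauto

lemma Vs_subset {s : α} : Vs S T F₀ s ⊆ S ∪ T := by
  intro v hv; exact (mem_Vs.mp hv).1

lemma nbrs_subset_S (hF₀ : F₀ ⊆ S ×ˢ T) (Z : Finset α) : nbrs F₀ Z ⊆ S := by
  intro x hx
  obtain ⟨e, he, rfl⟩ := Finset.mem_image.mp hx
  exact (Finset.mem_product.mp (hF₀ (Finset.mem_filter.mp he).1)).1

lemma nbrs_subset_of_memH₀ (hF₀ : F₀ ⊆ S ×ˢ T) {A : Finset α} (hA : memH₀ F₀ A) :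
    nbrs F₀ (A ∩ T) ⊆ A ∩ S := by
  intro x hx
  obtain ⟨e, he, rfl⟩ := Finset.mem_image.mp hx
  obtain ⟨he1, he2⟩ := Finset.mem_filter.mp he
  exact Finset.mem_inter.mpr ⟨hA e he1 (Finset.mem_inter.mp he2).1,
    (Finset.mem_product.mp (hF₀ he1)).1⟩

lemma edgesBetween_empty_right (E : Finset (α × α)) (X : Finset α) :
    edgesBetween E X ∅ = 0 := by
  simp [edgesBetween]

/-- Key counting lemma: `d_{G₀}(S₁,{y}) + d_{H₀}(y) ≤ |W|` when `S₁ ∪ Γ({y}) ⊆ W`. -/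
lemma edges_deg_le (hF₀ : F₀ ⊆ S ×ˢ T) {S₁ W : Finset α} {y : α}
    (h1 : S₁ ⊆ W) (h2 : nbrs F₀ {y} ⊆ W) :
    edgesBetween ((S ×ˢ T) \ F₀) S₁ {y} + degT F₀ y ≤ W.card := by
  classical
  set A₁ := ((S ×ˢ T) \ F₀).filter (fun e => e.1 ∈ S₁ ∧ e.2 ∈ ({y} : Finset α)) with hA₁
  set A₂ := F₀.filter (fun e => e.2 ∈ ({y} : Finset α)) with hA₂
  have hsnd : ∀ e ∈ A₁ ∪ A₂, e.2 = y := by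
    intro e he
    rcases Finset.mem_union.mp he with h | h
    · exact Finset.mem_singleton.mp (Finset.mem_filter.mp h).2.2
    · exact Finset.mem_singleton.mp (Finset.mem_filter.mp h).2
  have hinj : ∀ U : Finset (α × α), U ⊆ A₁ ∪ A₂ → (U.image Prod.fst).card = U.card := by
    intro U hU
    apply Finset.card_image_of_injOn
    intro e he e' he' hfst
    have := hsnd e (hU he); have := hsnd e' (hU he')
    exact Prod.ext hfst (by simp_all)
  have hcard1 : (A₁.image Prod.fst).card = A₁.card :=
    hinj A₁ Finset.subset_union_left
  have hcard2 : (A₂.image Prod.fst).card = A₂.card :=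
    hinj A₂ Finset.subset_union_right
  have hdisj : Disjoint (A₁.image Prod.fst) (A₂.image Prod.fst) := by
    rw [Finset.disjoint_left]
    intro s hs1 hs2
    obtain ⟨e, he, rfl⟩ := Finset.mem_image.mp hs1
    obtain ⟨e', he', hfe⟩ := Finset.mem_image.mp hs2
    have h2e : e = (e.1, y) := Prod.ext rfl (hsnd e (Finset.mem_union_left _ he))
    have h2e' : e' = (e.1, y) :=
      Prod.ext hfe (hsnd e' (Finset.mem_union_right _ he'))
    have hnot : (e.1, y) ∉ F₀ := by
      have := (Finset.mem_filter.mp he).1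
      rw [h2e] at this
      exact (Finset.mem_sdiff.mp this).2
    exact hnot (by rw [← h2e']; exact (Finset.mem_filter.mp he').1)
  have hsub : (A₁.image Prod.fst) ∪ (A₂.image Prod.fst) ⊆ W := by
    apply Finset.union_subset
    · intro s hs
      obtain ⟨e, he, rfl⟩ := Finset.mem_image.mp hs
      exact h1 (Finset.mem_filter.mp he).2.1
    · intro s hs
      exact h2 hs
  have hdeg : A₂.card = degT F₀ y := by
    unfold degT
    congr 1
    ext e; simp [hA₂]
  have hE : edgesBetween ((S ×ˢ T) \ F₀) S₁ {y} = A₁.card := rfl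
  have := Finset.card_le_card hsub
  rw [Finset.card_union_of_disjoint hdisj, hcard1, hcard2] at this
  omega

lemma rank_S_le (hrS : IsRankFn S rS) {X : Finset α} (hX : X ⊆ S) :
    rS S ≤ rS X + (S \ X).card := by
  have h3 := hrS.2.2 X (S \ X) hX (Finset.sdiff_subset)
  rw [Finset.union_sdiff_of_subset hX] at h3
  have h4 := hrS.1 (S \ X) Finset.sdiff_subset
  omega

end AuxHelpers
section StarConsequences

variable {S T : Finset α} {F₀ : Finset (α × α)} {rS : Finset α → ℕ}
  {pT : Finset α → ℤ} {m : α → ℤ} {γ : ℤ}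

/-- Consequence of (★): `p_T(Y') ≤ r_S(S)` for nonempty `Y' ⊆ T`. -/
lemma pT_le_rank (hF₀ : F₀ ⊆ S ×ˢ T) (hγS : ∑ v ∈ S, m v = γ)
    (hstar : StarCond S T F₀ rS pT m γ) {Y' : Finset α} (hY'T : Y' ⊆ T)
    (hY'ne : Y'.Nonempty) : pT Y' ≤ (rS S : ℤ) := by
  have h := hstar S (le_refl S) ∅ (Finset.empty_subset T) {Y'}
    (by intro Ti hTi
        rw [Finset.mem_singleton] at hTi
        subst hTi
        exact ⟨hY'ne, by rw [Finset.sdiff_empty]; exact hY'T⟩)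
    (by intro T₁ h₁ T₂ h₂ hne
        rw [Finset.mem_singleton] at h₁ h₂
        exact absurd (h₁.trans h₂.symm) hne)
  rw [Finset.sum_empty, Finset.sum_singleton, edgesBetween_empty_right, hγS] at h
  have hnb : S ∪ nbrs F₀ Y' = S := Finset.union_eq_left.mpr (nbrs_subset_S hF₀ Y')
  rw [hnb] at h
  push_cast at h ⊢
  linarith

/-- Consequence of (★): `m(y) + d_{H₀}(y) ≤ |S|` for `y ∈ T`. -/
lemma m_add_deg_le (hF₀ : F₀ ⊆ S ×ˢ T) (hγS : ∑ v ∈ S, m v = γ)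
    (hstar : StarCond S T F₀ rS pT m γ) {y : α} (hy : y ∈ T) :
    m y + (degT F₀ y : ℤ) ≤ (S.card : ℤ) := by
  have h := hstar S (le_refl S) {y} (Finset.singleton_subset_iff.mpr hy) ∅
    (by intro Ti hTi; exact absurd hTi (Finset.notMem_empty Ti))
    (by intro T₁ h₁; exact absurd h₁ (Finset.notMem_empty T₁))
  rw [Finset.sum_empty, Finset.sum_singleton, hγS] at h
  have hkey : edgesBetween ((S ×ˢ T) \ F₀) S {y} + degT F₀ y ≤ S.card :=
    edges_deg_le hF₀ (le_refl S) (nbrs_subset_S hF₀ {y})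
  have : m y ≤ (edgesBetween ((S ×ˢ T) \ F₀) S {y} : ℤ) := by linarith
  have hc : (edgesBetween ((S ×ˢ T) \ F₀) S {y} : ℤ) + (degT F₀ y : ℤ) ≤ (S.card : ℤ) := by
    exact_mod_cast hkey
  linarith

end StarConsequences

/-- The weight of a member of an independent family, according to the chosen branch `β`. -/
def uw (S T : Finset α) (F₀ : Finset (α × α)) (rS : Finset α → ℕ)
    (pT : Finset α → ℤ) (m : α → ℤ) (β : Finset α → Bool) (A : Finset α) : ℤ :=
  if β A then pT (A ∩ T) - (rS (A ∩ S) : ℤ)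
  else (∑ y ∈ A ∩ T, m y) - ((A ∩ S).card : ℤ) + ∑ y ∈ A ∩ T, (degT F₀ y : ℤ)
section CoreBase

variable {S T : Finset α} {F₀ : Finset (α × α)} {rS : Finset α → ℕ}
  {pT : Finset α → ℤ} {m : α → ℤ} {γ : ℤ}

lemma core_base (hF₀ : F₀ ⊆ S ×ˢ T) (hrS : IsRankFn S rS)
    (hstar : StarCond S T F₀ rS pT m γ)
    (𝓙 : Finset (Finset α)) (β : Finset α → Bool) (S₁ : Finset α) (hS₁ : S₁ ⊆ S)
    (hH : ∀ A ∈ 𝓙, memH₀ F₀ A)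
    (hYne : ∀ A ∈ 𝓙, (A ∩ T).Nonempty)
    (hS₁A : ∀ A ∈ 𝓙, S₁ ⊆ A)
    (hβ : ∀ A ∈ 𝓙, β A = false → (A ∩ T).card = 1)
    (hdisj : ∀ A ∈ 𝓙, ∀ B ∈ 𝓙, A ≠ B → A ∩ B ∩ T = ∅) :
    (∑ s ∈ S₁, m s) + ∑ A ∈ 𝓙, uw S T F₀ rS pT m β A ≤ γ := by
  classical
  have hTdisj : ∀ A ∈ 𝓙, ∀ B ∈ 𝓙, A ≠ B → Disjoint (A ∩ T) (B ∩ T) := by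
    intro A hA B hB hne
    rw [Finset.disjoint_left]
    intro x hxA hxB
    have : x ∈ A ∩ B ∩ T := by
      rw [Finset.mem_inter] at hxA hxB ⊢
      exact ⟨Finset.mem_inter.mpr ⟨hxA.1, hxB.1⟩, hxA.2⟩
    rw [hdisj A hA B hB hne] at this
    exact absurd this (Finset.notMem_empty x)
  set 𝓐 := 𝓙.filter (fun A => β A = true) with h𝓐
  set 𝓑 := 𝓙.filter (fun A => ¬ (β A = true)) with h𝓑
  have h𝓐J : 𝓐 ⊆ 𝓙 := Finset.filter_subset _ _
  have h𝓑J : 𝓑 ⊆ 𝓙 := Finset.filter_subset _ _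
  set Y := 𝓑.biUnion (fun B => B ∩ T) with hY
  set 𝒯 := 𝓐.image (fun A => A ∩ T) with h𝒯
  have hYT : Y ⊆ T := by
    intro x hx
    obtain ⟨B, _, hxB⟩ := Finset.mem_biUnion.mp hx
    exact (Finset.mem_inter.mp hxB).2
  -- apply star
  have hcond1 : ∀ Ti ∈ 𝒯, Ti.Nonempty ∧ Ti ⊆ T \ Y := by
    intro Ti hTi
    obtain ⟨A, hA, rfl⟩ := Finset.mem_image.mp hTi
    refine ⟨hYne A (h𝓐J hA), ?_⟩
    intro x hx
    rw [Finset.mem_sdiff]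
    refine ⟨(Finset.mem_inter.mp hx).2, ?_⟩
    intro hxY
    obtain ⟨B, hB, hxB⟩ := Finset.mem_biUnion.mp hxY
    have hne : A ≠ B := by
      intro h
      have h1 := (Finset.mem_filter.mp hA).2
      have h2 := (Finset.mem_filter.mp hB).2
      rw [h] at h1; exact h2 h1
    exact (Finset.disjoint_left.mp (hTdisj A (h𝓐J hA) B (h𝓑J hB) hne)) hx hxB
  have hcond2 : ∀ T₁ ∈ 𝒯, ∀ T₂ ∈ 𝒯, T₁ ≠ T₂ → Disjoint T₁ T₂ := by
    intro T₁ h₁ T₂ h₂ hne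
    obtain ⟨A₁, hA₁, rfl⟩ := Finset.mem_image.mp h₁
    obtain ⟨A₂, hA₂, rfl⟩ := Finset.mem_image.mp h₂
    exact hTdisj A₁ (h𝓐J hA₁) A₂ (h𝓐J hA₂) (fun h => hne (by rw [h]))
  have hstar' := hstar S₁ hS₁ Y hYT 𝒯 hcond1 hcond2
  -- injectivity of A ↦ A ∩ T on 𝓐
  have hinj : ∀ A ∈ 𝓐, ∀ B ∈ 𝓐, A ∩ T = B ∩ T → A = B := by
    intro A hA B hB hEq
    by_contra hne
    have := hTdisj A (h𝓐J hA) B (h𝓐J hB) hne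
    rw [hEq] at this
    obtain ⟨x, hx⟩ := hYne B (h𝓐J hB)
    exact (Finset.disjoint_left.mp this) hx hx
  -- (3) sum over 𝒯
  have hsum𝒯 : ∑ Ti ∈ 𝒯, (pT Ti - (rS (S₁ ∪ nbrs F₀ Ti) : ℤ))
      = ∑ A ∈ 𝓐, (pT (A ∩ T) - (rS (S₁ ∪ nbrs F₀ (A ∩ T)) : ℤ)) :=
    Finset.sum_image hinj
  -- (1) sum over Y
  have hsumY : ∑ v ∈ Y, m v = ∑ B ∈ 𝓑, ∑ y ∈ B ∩ T, m y := by
    apply Finset.sum_biUnion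
    intro a ha b hb hne
    exact hTdisj a (h𝓑J ha) b (h𝓑J hb) hne
  -- (2) edges decomposition
  have hedges : edgesBetween ((S ×ˢ T) \ F₀) S₁ Y
      = ∑ B ∈ 𝓑, edgesBetween ((S ×ˢ T) \ F₀) S₁ (B ∩ T) := by
    unfold edgesBetween
    have hset : ((S ×ˢ T) \ F₀).filter (fun e => e.1 ∈ S₁ ∧ e.2 ∈ Y)
        = 𝓑.biUnion (fun B => ((S ×ˢ T) \ F₀).filter (fun e => e.1 ∈ S₁ ∧ e.2 ∈ B ∩ T)) := by
      ext e
      simp only [Finset.mem_filter, Finset.mem_biUnion, hY]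
      tauto
    rw [hset]
    apply Finset.card_biUnion
    intro a ha b hb hne
    rw [Function.onFun, Finset.disjoint_left]
    intro e he1 he2
    have hx1 := (Finset.mem_filter.mp he1).2.2
    have hx2 := (Finset.mem_filter.mp he2).2.2
    exact (Finset.disjoint_left.mp (hTdisj a (h𝓑J ha) b (h𝓑J hb) hne)) hx1 hx2
  -- per-element bounds
  have hboundA : ∀ A ∈ 𝓐, uw S T F₀ rS pT m β A
      ≤ pT (A ∩ T) - (rS (S₁ ∪ nbrs F₀ (A ∩ T)) : ℤ) := by
    intro A hA
    have hβA := (Finset.mem_filter.mp hA).2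
    have hAJ := h𝓐J hA
    unfold uw
    rw [if_pos hβA]
    have hsub : S₁ ∪ nbrs F₀ (A ∩ T) ⊆ A ∩ S :=
      Finset.union_subset (Finset.subset_inter (hS₁A A hAJ) hS₁)
        (nbrs_subset_of_memH₀ hF₀ (hH A hAJ))
    have := hrS.2.1 (S₁ ∪ nbrs F₀ (A ∩ T)) (A ∩ S) hsub Finset.inter_subset_right
    have : (rS (S₁ ∪ nbrs F₀ (A ∩ T)) : ℤ) ≤ (rS (A ∩ S) : ℤ) := by exact_mod_cast this
    linarith
  have hboundB : ∀ B ∈ 𝓑, uw S T F₀ rS pT m β B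
      ≤ (∑ y ∈ B ∩ T, m y) - (edgesBetween ((S ×ˢ T) \ F₀) S₁ (B ∩ T) : ℤ) := by
    intro B hB
    have hβB : β B = false := by
      have := (Finset.mem_filter.mp hB).2
      simpa using this
    have hBJ := h𝓑J hB
    obtain ⟨y, hy⟩ := Finset.card_eq_one.mp (hβ B hBJ hβB)
    have hkey : edgesBetween ((S ×ˢ T) \ F₀) S₁ {y} + degT F₀ y ≤ (B ∩ S).card := by
      apply edges_deg_le hF₀ (Finset.subset_inter (hS₁A B hBJ) hS₁)
      rw [← hy]
      exact nbrs_subset_of_memH₀ hF₀ (hH B hBJ)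
    unfold uw
    rw [if_neg (by rw [hβB]; exact Bool.false_ne_true), hy]
    rw [Finset.sum_singleton, Finset.sum_singleton]
    have hc : (edgesBetween ((S ×ˢ T) \ F₀) S₁ {y} : ℤ) + (degT F₀ y : ℤ)
        ≤ ((B ∩ S).card : ℤ) := by exact_mod_cast hkey
    linarith
  -- assemble
  have hsplit : ∑ A ∈ 𝓙, uw S T F₀ rS pT m β A
      = ∑ A ∈ 𝓐, uw S T F₀ rS pT m β A + ∑ A ∈ 𝓑, uw S T F₀ rS pT m β A :=
    (Finset.sum_filter_add_sum_filter_not 𝓙 (fun A => β A = true) _).symm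
  have hA_le : ∑ A ∈ 𝓐, uw S T F₀ rS pT m β A
      ≤ ∑ A ∈ 𝓐, (pT (A ∩ T) - (rS (S₁ ∪ nbrs F₀ (A ∩ T)) : ℤ)) :=
    Finset.sum_le_sum hboundA
  have hB_le : ∑ B ∈ 𝓑, uw S T F₀ rS pT m β B
      ≤ ∑ B ∈ 𝓑, ((∑ y ∈ B ∩ T, m y) - (edgesBetween ((S ×ˢ T) \ F₀) S₁ (B ∩ T) : ℤ)) :=
    Finset.sum_le_sum hboundB
  have hEcast : (edgesBetween ((S ×ˢ T) \ F₀) S₁ Y : ℤ)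
      = ∑ B ∈ 𝓑, (edgesBetween ((S ×ˢ T) \ F₀) S₁ (B ∩ T) : ℤ) := by
    rw [hedges]; push_cast; ring
  rw [Finset.sum_sub_distrib] at hB_le
  rw [hsum𝒯] at hstar'
  rw [hsumY, hEcast] at hstar'
  linarith
lemma inter_inter_T {A B T : Finset α} : (A ∩ T) ∩ (B ∩ T) = A ∩ B ∩ T := by
  ext x; simp only [Finset.mem_inter]; tauto

lemma card_key_helper {S A B : Finset α} (hU : S ⊆ A ∪ B) :
    (A ∩ B ∩ S).card + (S \ (A ∩ S)).card ≤ (B ∩ S).card := by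
  have hsub : (A ∩ B ∩ S) ∪ (S \ (A ∩ S)) ⊆ B ∩ S := by
    intro x hx
    rcases Finset.mem_union.mp hx with h | h
    · rw [Finset.mem_inter] at h ⊢
      exact ⟨(Finset.mem_inter.mp h.1).2, h.2⟩
    · rw [Finset.mem_sdiff] at h
      rw [Finset.mem_inter]
      refine ⟨?_, h.1⟩
      rcases Finset.mem_union.mp (hU h.1) with hA | hB
      · exact absurd (Finset.mem_inter.mpr ⟨hA, h.1⟩) h.2
      · exact hB
  have hdisj : Disjoint (A ∩ B ∩ S) (S \ (A ∩ S)) := by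
    rw [Finset.disjoint_left]
    intro x hx hx'
    rw [Finset.mem_sdiff] at hx'
    rw [Finset.mem_inter] at hx
    exact hx'.2 (Finset.mem_inter.mpr ⟨(Finset.mem_inter.mp hx.1).1, hx.2⟩)
  calc (A ∩ B ∩ S).card + (S \ (A ∩ S)).card
      = ((A ∩ B ∩ S) ∪ (S \ (A ∩ S))).card := (Finset.card_union_of_disjoint hdisj).symm
    _ ≤ (B ∩ S).card := Finset.card_le_card hsub

section Uncross

variable {S T : Finset α} {F₀ : Finset (α × α)} {rS : Finset α → ℕ}
  {pT : Finset α → ℤ} {m : α → ℤ} {γ : ℤ}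

/-- Mixed-branch uncrossing inequality: branch-1 set `A`, branch-2 singleton set `B`. -/
lemma uncross_mixed (hF₀ : F₀ ⊆ S ×ˢ T) (hrS : IsRankFn S rS)
    (hγS : ∑ v ∈ S, m v = γ) (hstar : StarCond S T F₀ rS pT m γ)
    {A B : Finset α} (hiT : (A ∩ B ∩ T).Nonempty) (hU : S ⊆ A ∪ B)
    (hcardB : (B ∩ T).card = 1) :
    (pT (A ∩ T) - (rS (A ∩ S) : ℤ))
      + ((∑ y ∈ B ∩ T, m y) - ((B ∩ S).card : ℤ) + ∑ y ∈ B ∩ T, (degT F₀ y : ℤ))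
    ≤ (∑ y ∈ A ∩ B ∩ T, m y) - ((A ∩ B ∩ S).card : ℤ)
      + ∑ y ∈ A ∩ B ∩ T, (degT F₀ y : ℤ) := by
  obtain ⟨y, hy⟩ := Finset.card_eq_one.mp hcardB
  have hiy : A ∩ B ∩ T = {y} := by
    have hsub : A ∩ B ∩ T ⊆ {y} := by
      rw [← hy]
      intro x hx
      rw [Finset.mem_inter] at hx ⊢
      exact ⟨(Finset.mem_inter.mp hx.1).2, hx.2⟩
    rcases Finset.subset_singleton_iff.mp hsub with h | h
    · rw [h] at hiT; exact absurd hiT Finset.not_nonempty_empty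
    · exact h
  have hATne : (A ∩ T).Nonempty := by
    obtain ⟨x, hx⟩ := hiT
    rw [Finset.mem_inter] at hx
    exact ⟨x, Finset.mem_inter.mpr ⟨(Finset.mem_inter.mp hx.1).1, hx.2⟩⟩
  have hL1 : pT (A ∩ T) ≤ (rS S : ℤ) :=
    pT_le_rank hF₀ hγS hstar Finset.inter_subset_right hATne
  have h1 : rS S ≤ rS (A ∩ S) + (S \ (A ∩ S)).card := rank_S_le hrS Finset.inter_subset_right
  have h2 := card_key_helper hU
  have hkey : (rS S : ℤ) + ((A ∩ B ∩ S).card : ℤ) ≤ (rS (A ∩ S) : ℤ) + ((B ∩ S).card : ℤ) := by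
    exact_mod_cast Nat.le_trans (by omega) (by omega : rS (A ∩ S) + ((A ∩ B ∩ S).card + (S \ (A ∩ S)).card) ≤ rS (A ∩ S) + (B ∩ S).card)
  rw [hy, hiy]
  simp only [Finset.sum_singleton]
  linarith

/-- Key uncrossing inequality: the combined weight of a crossing pair is at most
the appropriate-branch weight of `A ∩ B` (the "union" set's weight being ≤ 0). -/
lemma uncross_key (hF₀ : F₀ ⊆ S ×ˢ T) (hrS : IsRankFn S rS)
    (hpT : ∀ X Y : Finset α, X ⊆ T → Y ⊆ T → (X ∩ Y).Nonempty →
      0 < pT X → 0 < pT Y → pT X + pT Y ≤ pT (X ∩ Y) + pT (X ∪ Y))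
    (hγS : ∑ v ∈ S, m v = γ) (hstar : StarCond S T F₀ rS pT m γ)
    {A B : Finset α} {β : Finset α → Bool}
    (hiT : (A ∩ B ∩ T).Nonempty) (hU : S ⊆ A ∪ B)
    (hβA : β A = false → (A ∩ T).card = 1) (hβB : β B = false → (B ∩ T).card = 1)
    (hposA : 0 < uw S T F₀ rS pT m β A) (hposB : 0 < uw S T F₀ rS pT m β B) :
    (uw S T F₀ rS pT m β A + uw S T F₀ rS pT m β B
      ≤ (if β A && β B then pT (A ∩ B ∩ T) - (rS (A ∩ B ∩ S) : ℤ)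
         else (∑ y ∈ A ∩ B ∩ T, m y) - ((A ∩ B ∩ S).card : ℤ)
            + ∑ y ∈ A ∩ B ∩ T, (degT F₀ y : ℤ)))
    ∧ ((β A && β B) = false → (A ∩ B ∩ T).card = 1) := by
  have hXU : (A ∩ S) ∪ (B ∩ S) = S := by
    apply Finset.Subset.antisymm
    · exact Finset.union_subset Finset.inter_subset_right Finset.inter_subset_right
    · intro x hx
      rcases Finset.mem_union.mp (hU hx) with h | h
      · exact Finset.mem_union_left _ (Finset.mem_inter.mpr ⟨h, hx⟩)
      · exact Finset.mem_union_right _ (Finset.mem_inter.mpr ⟨h, hx⟩)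
  have hIS : (A ∩ S) ∩ (B ∩ S) = A ∩ B ∩ S := inter_inter_T
  have hBA : B ∩ A ∩ T = A ∩ B ∩ T := by rw [Finset.inter_comm B A]
  have hBAS : B ∩ A ∩ S = A ∩ B ∩ S := by rw [Finset.inter_comm B A]
  cases hbA : β A with
  | true =>
    cases hbB : β B with
    | true =>
      -- both branch 1
      simp only [hbA, hbB, Bool.and_self, if_true]
      have huwA : uw S T F₀ rS pT m β A = pT (A ∩ T) - (rS (A ∩ S) : ℤ) := by
        unfold uw; rw [if_pos hbA]
      have huwB : uw S T F₀ rS pT m β B = pT (B ∩ T) - (rS (B ∩ S) : ℤ) := by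
        unfold uw; rw [if_pos hbB]
      refine ⟨?_, by simp⟩
      have hposA' : 0 < pT (A ∩ T) := by
        rw [huwA] at hposA
        have : (0 : ℤ) ≤ (rS (A ∩ S) : ℤ) := Int.natCast_nonneg _
        linarith
      have hposB' : 0 < pT (B ∩ T) := by
        rw [huwB] at hposB
        have : (0 : ℤ) ≤ (rS (B ∩ S) : ℤ) := Int.natCast_nonneg _
        linarith
      have hsup := hpT (A ∩ T) (B ∩ T) Finset.inter_subset_right
        Finset.inter_subset_right (by rw [inter_inter_T]; exact hiT) hposA' hposB'
      rw [inter_inter_T] at hsup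
      have hUT : (A ∩ T) ∪ (B ∩ T) ⊆ T :=
        Finset.union_subset Finset.inter_subset_right Finset.inter_subset_right
      have hUTne : ((A ∩ T) ∪ (B ∩ T)).Nonempty := by
        obtain ⟨x, hx⟩ := hiT
        rw [Finset.mem_inter] at hx
        exact ⟨x, Finset.mem_union_left _
          (Finset.mem_inter.mpr ⟨(Finset.mem_inter.mp hx.1).1, hx.2⟩)⟩
      have hL1 : pT ((A ∩ T) ∪ (B ∩ T)) ≤ (rS S : ℤ) :=
        pT_le_rank hF₀ hγS hstar hUT hUTne
      have hr := hrS.2.2 (A ∩ S) (B ∩ S) Finset.inter_subset_right Finset.inter_subset_right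
      rw [hXU, hIS] at hr
      have hr' : (rS S : ℤ) + (rS (A ∩ B ∩ S) : ℤ) ≤ (rS (A ∩ S) : ℤ) + (rS (B ∩ S) : ℤ) := by
        exact_mod_cast hr
      rw [huwA, huwB]
      linarith
    | false =>
      -- A branch 1, B branch 2
      simp only [hbA, hbB, Bool.and_false, Bool.false_eq_true, if_false]
      have huwA : uw S T F₀ rS pT m β A = pT (A ∩ T) - (rS (A ∩ S) : ℤ) := by
        unfold uw; rw [if_pos hbA]
      have huwB : uw S T F₀ rS pT m β B
          = (∑ y ∈ B ∩ T, m y) - ((B ∩ S).card : ℤ) + ∑ y ∈ B ∩ T, (degT F₀ y : ℤ) := by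
        unfold uw; rw [if_neg (by rw [hbB]; exact Bool.false_ne_true)]
      constructor
      · rw [huwA, huwB]
        exact uncross_mixed hF₀ hrS hγS hstar hiT hU (hβB hbB)
      · intro _
        obtain ⟨y, hy⟩ := Finset.card_eq_one.mp (hβB hbB)
        have hsub : A ∩ B ∩ T ⊆ {y} := by
          rw [← hy]
          intro x hx
          rw [Finset.mem_inter] at hx ⊢
          exact ⟨(Finset.mem_inter.mp hx.1).2, hx.2⟩
        rcases Finset.subset_singleton_iff.mp hsub with h | h
        · rw [h] at hiT; exact absurd hiT Finset.not_nonempty_empty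
        · rw [h]; exact Finset.card_singleton y
  | false =>
    have hcA := hβA hbA
    obtain ⟨a, ha⟩ := Finset.card_eq_one.mp hcA
    have hiy : A ∩ B ∩ T = {a} := by
      have hsub : A ∩ B ∩ T ⊆ {a} := by
        rw [← ha]
        intro x hx
        rw [Finset.mem_inter] at hx ⊢
        exact ⟨(Finset.mem_inter.mp hx.1).1, hx.2⟩
      rcases Finset.subset_singleton_iff.mp hsub with h | h
      · rw [h] at hiT; exact absurd hiT Finset.not_nonempty_empty
      · exact h
    have hcard1 : (A ∩ B ∩ T).card = 1 := by rw [hiy]; exact Finset.card_singleton a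
    cases hbB : β B with
    | true =>
      -- A branch 2, B branch 1 : symmetric to mixed case
      simp only [hbA, hbB, Bool.false_and, Bool.false_eq_true, if_false]
      have huwA : uw S T F₀ rS pT m β A
          = (∑ y ∈ A ∩ T, m y) - ((A ∩ S).card : ℤ) + ∑ y ∈ A ∩ T, (degT F₀ y : ℤ) := by
        unfold uw; rw [if_neg (by rw [hbA]; exact Bool.false_ne_true)]
      have huwB : uw S T F₀ rS pT m β B = pT (B ∩ T) - (rS (B ∩ S) : ℤ) := by
        unfold uw; rw [if_pos hbB]
      refine ⟨?_, fun _ => hcard1⟩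
      rw [huwA, huwB]
      have := uncross_mixed hF₀ hrS hγS hstar (A := B) (B := A)
        (by rw [hBA]; exact hiT) (by rw [Finset.union_comm]; exact hU) hcA
      rw [hBA, hBAS] at this
      linarith
    | false =>
      -- both branch 2
      simp only [hbA, hbB, Bool.and_self, Bool.false_eq_true, if_false]
      have hcB := hβB hbB
      obtain ⟨b, hb⟩ := Finset.card_eq_one.mp hcB
      have haT : a ∈ A ∩ T := by rw [ha]; exact Finset.mem_singleton_self a
      have hbB' : B ∩ T = {a} := by
        have haB : a ∈ B ∩ T := by
          have : a ∈ A ∩ B ∩ T := by rw [hiy]; exact Finset.mem_singleton_self a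
          rw [Finset.mem_inter] at this ⊢
          exact ⟨(Finset.mem_inter.mp this.1).2, this.2⟩
        rw [hb] at haB
        rw [hb, Finset.mem_singleton.mp haB]
      have huwA : uw S T F₀ rS pT m β A
          = m a - ((A ∩ S).card : ℤ) + (degT F₀ a : ℤ) := by
        unfold uw
        rw [if_neg (by rw [hbA]; exact Bool.false_ne_true), ha, Finset.sum_singleton,
          Finset.sum_singleton]
      have huwB : uw S T F₀ rS pT m β B
          = m a - ((B ∩ S).card : ℤ) + (degT F₀ a : ℤ) := by
        unfold uw
        rw [if_neg (by rw [hbB]; exact Bool.false_ne_true), hbB', Finset.sum_singleton,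
          Finset.sum_singleton]
      have hcards := Finset.card_inter_add_card_union (A ∩ S) (B ∩ S)
      rw [hIS, hXU] at hcards
      have hcards' : ((A ∩ B ∩ S).card : ℤ) + (S.card : ℤ)
          = ((A ∩ S).card : ℤ) + ((B ∩ S).card : ℤ) := by exact_mod_cast hcards
      have hL2 : m a + (degT F₀ a : ℤ) ≤ (S.card : ℤ) :=
        m_add_deg_le hF₀ hγS hstar (Finset.mem_inter.mp haT).2
      refine ⟨?_, fun _ => hcard1⟩
      rw [huwA, huwB, hiy, Finset.sum_singleton, Finset.sum_singleton]
      linarith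

end Uncross
section CoreInduction

variable {S T : Finset α} {F₀ : Finset (α × α)} {rS : Finset α → ℕ}
  {pT : Finset α → ℤ} {m : α → ℤ} {γ : ℤ}

lemma uw_congr {β β' : Finset α → Bool} {C : Finset α} (h : β' C = β C) :
    uw S T F₀ rS pT m β' C = uw S T F₀ rS pT m β C := by
  unfold uw; rw [h]

lemma core (hF₀ : F₀ ⊆ S ×ˢ T) (hrS : IsRankFn S rS)
    (hpT : ∀ X Y : Finset α, X ⊆ T → Y ⊆ T → (X ∩ Y).Nonempty →
      0 < pT X → 0 < pT Y → pT X + pT Y ≤ pT (X ∩ Y) + pT (X ∪ Y))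
    (hγS : ∑ v ∈ S, m v = γ) (hstar : StarCond S T F₀ rS pT m γ) :
    ∀ n : ℕ, ∀ 𝓙 : Finset (Finset α), 𝓙.card ≤ n → ∀ β : Finset α → Bool, ∀ S₁ : Finset α,
    S₁ ⊆ S →
    (∀ A ∈ 𝓙, memH₀ F₀ A) →
    (∀ A ∈ 𝓙, (A ∩ T).Nonempty) →
    (∀ A ∈ 𝓙, S₁ ⊆ A) →
    (∀ A ∈ 𝓙, ¬ S ⊆ A) →
    (∀ A ∈ 𝓙, β A = false → (A ∩ T).card = 1) →
    (∀ A ∈ 𝓙, 0 < uw S T F₀ rS pT m β A) →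
    (∀ A ∈ 𝓙, ∀ B ∈ 𝓙, A ≠ B → A ∩ B ∩ T = ∅ ∨ S ⊆ A ∪ B) →
    (∑ s ∈ S₁, m s) + ∑ A ∈ 𝓙, uw S T F₀ rS pT m β A ≤ γ := by
  intro n
  induction n with
  | zero =>
    intro 𝓙 hcard β S₁ hS₁ hH hYne hS₁A hXne hβ hpos hind
    have h𝓙 : 𝓙 = ∅ := Finset.card_eq_zero.mp (Nat.le_zero.mp hcard)
    subst h𝓙
    exact core_base hF₀ hrS hstar ∅ β S₁ hS₁ (by simp) (by simp) (by simp) (by simp) (by simp)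
  | succ n ih =>
    intro 𝓙 hcard β S₁ hS₁ hH hYne hS₁A hXne hβ hpos hind
    by_cases hcr : ∃ A ∈ 𝓙, ∃ B ∈ 𝓙, A ≠ B ∧ (A ∩ B ∩ T).Nonempty
    · obtain ⟨A, hA, B, hB, hAB, hiT⟩ := hcr
      have hU : S ⊆ A ∪ B := by
        rcases hind A hA B hB hAB with h | h
        · rw [h] at hiT; exact absurd hiT Finset.not_nonempty_empty
        · exact h
      obtain ⟨hkey, hc1⟩ := uncross_key hF₀ hrS hpT hγS hstar hiT hU (hβ A hA) (hβ B hB)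
        (hpos A hA) (hpos B hB)
      have hBA' : B ∈ 𝓙.erase A := Finset.mem_erase.mpr ⟨Ne.symm hAB, hB⟩
      set R := (𝓙.erase A).erase B with hR
      have hRsub : R ⊆ 𝓙 := (Finset.erase_subset _ _).trans (Finset.erase_subset _ _)
      have hmemR : ∀ C ∈ R, C ≠ A ∧ C ≠ B ∧ C ∈ 𝓙 := by
        intro C hC
        obtain ⟨h1, h2⟩ := Finset.mem_erase.mp hC
        obtain ⟨h3, h4⟩ := Finset.mem_erase.mp h2
        exact ⟨h3, h1, h4⟩
      have hnotin : A ∩ B ∉ R := by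
        intro hC
        obtain ⟨hCA, _, hCJ⟩ := hmemR _ hC
        have h1 : (A ∩ B) ∩ A ∩ T = A ∩ B ∩ T := by
          ext x; simp only [Finset.mem_inter]; tauto
        rcases hind (A ∩ B) hCJ A hA hCA with h | h
        · rw [h1] at h; rw [h] at hiT; exact absurd hiT Finset.not_nonempty_empty
        · have h2 : (A ∩ B) ∪ A = A := Finset.union_eq_right.mpr Finset.inter_subset_left
          rw [h2] at h
          exact hXne A hA h
      -- sum decomposition
      have e1 : uw S T F₀ rS pT m β A + ∑ C ∈ 𝓙.erase A, uw S T F₀ rS pT m β C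
          = ∑ C ∈ 𝓙, uw S T F₀ rS pT m β C := Finset.add_sum_erase _ _ hA
      have e2 : uw S T F₀ rS pT m β B + ∑ C ∈ R, uw S T F₀ rS pT m β C
          = ∑ C ∈ 𝓙.erase A, uw S T F₀ rS pT m β C := Finset.add_sum_erase _ _ hBA'
      set β' := Function.update β (A ∩ B) (β A && β B) with hβ'
      have hβ'AB : β' (A ∩ B) = (β A && β B) := Function.update_self _ _ _
      have hβ'R : ∀ C ∈ R, β' C = β C := by
        intro C hC
        apply Function.update_of_ne
        intro h; rw [h] at hC; exact hnotin hC
      have hsumR : ∑ C ∈ R, uw S T F₀ rS pT m β' C = ∑ C ∈ R, uw S T F₀ rS pT m β C :=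
        Finset.sum_congr rfl (fun C hC => uw_congr (hβ'R C hC))
      have huwAB : uw S T F₀ rS pT m β' (A ∩ B)
          = (if β A && β B then pT (A ∩ B ∩ T) - (rS (A ∩ B ∩ S) : ℤ)
             else (∑ y ∈ A ∩ B ∩ T, m y) - ((A ∩ B ∩ S).card : ℤ)
                + ∑ y ∈ A ∩ B ∩ T, (degT F₀ y : ℤ)) := by
        unfold uw
        rw [hβ'AB]
      rw [← huwAB] at hkey
      -- cardinalities
      have hcR : R.card + 2 = 𝓙.card := by
        rw [hR, Finset.card_erase_of_mem hBA', Finset.card_erase_of_mem hA]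
        have h1 : 0 < (𝓙.erase A).card := Finset.card_pos.mpr ⟨B, hBA'⟩
        have h2 : 0 < 𝓙.card := Finset.card_pos.mpr ⟨A, hA⟩
        rw [Finset.card_erase_of_mem hA] at h1
        omega
      have hindAB : ∀ D ∈ 𝓙, D ≠ A → D ≠ B → ((A ∩ B) ∩ D ∩ T).Nonempty →
          S ⊆ (A ∩ B) ∪ D := by
        intro D hD hDA hDB hne
        have hsubA : (A ∩ B) ∩ D ∩ T ⊆ A ∩ D ∩ T := by
          intro x hx
          simp only [Finset.mem_inter] at hx ⊢
          tauto
        have hsubB : (A ∩ B) ∩ D ∩ T ⊆ B ∩ D ∩ T := by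
          intro x hx
          simp only [Finset.mem_inter] at hx ⊢
          tauto
        have hUA : S ⊆ A ∪ D := by
          rcases hind A hA D hD (Ne.symm hDA) with h | h
          · obtain ⟨x, hx⟩ := hne
            rw [Finset.eq_empty_iff_forall_notMem] at h
            exact absurd (hsubA hx) (h x)
          · exact h
        have hUB : S ⊆ B ∪ D := by
          rcases hind B hB D hD (Ne.symm hDB) with h | h
          · obtain ⟨x, hx⟩ := hne
            rw [Finset.eq_empty_iff_forall_notMem] at h
            exact absurd (hsubB hx) (h x)
          · exact h
        intro x hx
        rcases Finset.mem_union.mp (hUA hx) with h1 | h1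
        · rcases Finset.mem_union.mp (hUB hx) with h2 | h2
          · exact Finset.mem_union_left _ (Finset.mem_inter.mpr ⟨h1, h2⟩)
          · exact Finset.mem_union_right _ h2
        · exact Finset.mem_union_right _ h1
      by_cases hpos' : 0 < uw S T F₀ rS pT m β' (A ∩ B)
      · -- keep A ∩ B
        set 𝓙' := insert (A ∩ B) R with h𝓙'
        have hcard' : 𝓙'.card ≤ n := by
          have h1 : 𝓙'.card ≤ R.card + 1 := by
            rw [h𝓙']; exact Finset.card_insert_le _ _
          omega
        have hmem' : ∀ C ∈ 𝓙', C = A ∩ B ∨ (C ≠ A ∩ B ∧ C ≠ A ∧ C ≠ B ∧ C ∈ 𝓙) := by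
          intro C hC
          rcases Finset.mem_insert.mp hC with h | h
          · exact Or.inl h
          · right
            obtain ⟨h1, h2, h3⟩ := hmemR _ h
            exact ⟨fun heq => hnotin (heq ▸ h), h1, h2, h3⟩
        have happ := ih 𝓙' hcard' β' S₁ hS₁
          (by intro C hC
              rcases hmem' C hC with rfl | ⟨_, _, _, hCJ⟩
              · intro e he h2
                rw [Finset.mem_inter] at h2 ⊢
                exact ⟨hH A hA e he h2.1, hH B hB e he h2.2⟩
              · exact hH C hCJ)
          (by intro C hC
              rcases hmem' C hC with rfl | ⟨_, _, _, hCJ⟩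
              · exact hiT
              · exact hYne C hCJ)
          (by intro C hC
              rcases hmem' C hC with rfl | ⟨_, _, _, hCJ⟩
              · exact Finset.subset_inter (hS₁A A hA) (hS₁A B hB)
              · exact hS₁A C hCJ)
          (by intro C hC
              rcases hmem' C hC with rfl | ⟨_, _, _, hCJ⟩
              · intro h
                exact hXne A hA (h.trans Finset.inter_subset_left)
              · exact hXne C hCJ)
          (by intro C hC
              rcases hmem' C hC with rfl | ⟨hne, _, _, hCJ⟩
              · rw [hβ'AB]; exact hc1
              · rw [hβ', Function.update_of_ne hne _ _]
                exact hβ C hCJ)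
          (by intro C hC
              rcases hmem' C hC with rfl | ⟨hne, _, _, hCJ⟩
              · exact hpos'
              · rw [uw_congr (show β' C = β C by rw [hβ']; exact Function.update_of_ne hne _ _)]
                exact hpos C hCJ)
          (by intro C hC D hD hne
              rcases hmem' C hC with rfl | ⟨hneC, hCA, hCB, hCJ⟩
              · rcases hmem' D hD with rfl | ⟨hneD, hDA, hDB, hDJ⟩
                · exact absurd rfl hne
                · by_cases hE : (A ∩ B) ∩ D ∩ T = ∅
                  · exact Or.inl hE
                  · exact Or.inr (hindAB D hDJ hDA hDB (Finset.nonempty_iff_ne_empty.mpr hE))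
              · rcases hmem' D hD with rfl | ⟨hneD, hDA, hDB, hDJ⟩
                · by_cases hE : C ∩ (A ∩ B) ∩ T = ∅
                  · exact Or.inl hE
                  · right
                    have hcomm : (A ∩ B) ∩ C ∩ T = C ∩ (A ∩ B) ∩ T := by
                      rw [Finset.inter_comm (A ∩ B) C]
                    have := hindAB C hCJ hCA hCB
                      (by rw [hcomm]; exact Finset.nonempty_iff_ne_empty.mpr hE)
                    rw [Finset.union_comm] at this
                    exact this
                · exact hind C hCJ D hDJ hne)
        have hins : ∑ C ∈ 𝓙', uw S T F₀ rS pT m β' C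
            = uw S T F₀ rS pT m β' (A ∩ B) + ∑ C ∈ R, uw S T F₀ rS pT m β' C :=
          Finset.sum_insert hnotin
        rw [hins, hsumR] at happ
        linarith
      · -- drop A ∩ B
        push_neg at hpos'
        have hcardR : R.card ≤ n := by omega
        have happ := ih R hcardR β S₁ hS₁
          (fun C hC => hH C (hRsub hC))
          (fun C hC => hYne C (hRsub hC))
          (fun C hC => hS₁A C (hRsub hC))
          (fun C hC => hXne C (hRsub hC))
          (fun C hC => hβ C (hRsub hC))
          (fun C hC => hpos C (hRsub hC))
          (fun C hC D hD hne => hind C (hRsub hC) D (hRsub hD) hne)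
        linarith
    · apply core_base hF₀ hrS hstar 𝓙 β S₁ hS₁ hH hYne hS₁A hβ
      intro A hA B hB hne
      by_contra h
      exact hcr ⟨A, hA, B, hB, hne, Finset.nonempty_iff_ne_empty.mpr h⟩

end CoreInduction

/-- **Lemma (ν = γ) of the paper.** Under Condition (★), the maximum of
`∑_{V' ∈ 𝓘} p₁(V')` over all `ST`-independent families `𝓘` of subsets of `V = S ∪ T`
equals `γ`. -/
theorem max_total_p₁_value_eq_γ
    (S T : Finset α) (hST : Disjoint S T) (hS : S.Nonempty) (hT : T.Nonempty)
    (F₀ : Finset (α × α)) (hF₀ : F₀ ⊆ S ×ˢ T)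
    (rS : Finset α → ℕ) (hrS : IsRankFn S rS)
    (pT : Finset α → ℤ)
    -- `p_T` is positively intersecting supermodular on `T`
    (hpT : ∀ X Y : Finset α, X ⊆ T → Y ⊆ T → (X ∩ Y).Nonempty →
      0 < pT X → 0 < pT Y → pT X + pT Y ≤ pT (X ∩ Y) + pT (X ∪ Y))
    (m : α → ℤ) (γ : ℤ)
    (hγS : ∑ v ∈ S, m v = γ) (hγT : ∑ v ∈ T, m v = γ)
    (hstar : StarCond S T F₀ rS pT m γ) :
    IsGreatest {x : ℤ | ∃ 𝓘 : Finset (Finset α),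
        (∀ A ∈ 𝓘, A ⊆ S ∪ T) ∧
        (∀ A ∈ 𝓘, ∀ B ∈ 𝓘, A ≠ B → (A ∩ B ∩ T = ∅ ∨ S ⊆ A ∪ B)) ∧
        x = ∑ A ∈ 𝓘, p₁ S T F₀ rS pT m A} γ := by
  classical
  constructor
  · -- membership: the family {V_s : s ∈ S} achieves γ
    refine ⟨S.image (Vs S T F₀), ?_, ?_, ?_⟩
    · intro A hA
      obtain ⟨s, _, rfl⟩ := Finset.mem_image.mp hA
      exact Vs_subset
    · intro A hA B hB hne
      obtain ⟨s, hs, rfl⟩ := Finset.mem_image.mp hA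
      obtain ⟨s', hs', rfl⟩ := Finset.mem_image.mp hB
      right
      have hss' : s ≠ s' := fun h => hne (by rw [h])
      intro v hv
      have hvF : ∀ u : α, (u, v) ∉ F₀ := by
        intro u hu
        exact (Finset.disjoint_left.mp hST hv) (Finset.mem_product.mp (hF₀ hu)).2
      by_cases h : v = s
      · subst h
        exact Finset.mem_union_right _
          (mem_Vs.mpr ⟨Finset.mem_union_left _ hv, hss', hvF s'⟩)
      · exact Finset.mem_union_left _
          (mem_Vs.mpr ⟨Finset.mem_union_left _ hv, h, hvF s⟩)
    · have hfib := Finset.sum_fiberwise_of_maps_to (g := Vs S T F₀)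
        (t := S.image (Vs S T F₀)) (fun s hs => Finset.mem_image_of_mem _ hs) m
      rw [← hγS, ← hfib]
      apply Finset.sum_congr rfl
      intro A hA
      obtain ⟨s, hs, rfl⟩ := Finset.mem_image.mp hA
      unfold p₁
      rw [if_pos ⟨s, hs, rfl⟩]
      apply Finset.sum_congr _ (fun _ _ => rfl)
      ext t
      simp only [Finset.mem_filter]
      exact ⟨fun ⟨h1, h2⟩ => ⟨h1, h2.symm⟩, fun ⟨h1, h2⟩ => ⟨h1, h2.symm⟩⟩
  · -- upper bound
    rintro x ⟨𝓘, hsub, hind, rfl⟩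
    set 𝓘p := 𝓘.filter (fun A => 0 < p₁ S T F₀ rS pT m A) with h𝓘p
    have h𝓘p𝓘 : 𝓘p ⊆ 𝓘 := Finset.filter_subset _ _
    have hstep1 : ∑ A ∈ 𝓘, p₁ S T F₀ rS pT m A ≤ ∑ A ∈ 𝓘p, p₁ S T F₀ rS pT m A := by
      rw [← Finset.sum_filter_add_sum_filter_not 𝓘 (fun A => 0 < p₁ S T F₀ rS pT m A)]
      have hle : ∑ A ∈ 𝓘.filter (fun A => ¬ 0 < p₁ S T F₀ rS pT m A),
          p₁ S T F₀ rS pT m A ≤ 0 :=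
        Finset.sum_nonpos (fun A hA => le_of_not_gt (Finset.mem_filter.mp hA).2)
      rw [← h𝓘p]
      linarith
    set 𝓥 := 𝓘p.filter (fun A => ∃ s ∈ S, A = Vs S T F₀ s) with h𝓥
    set 𝓙 := 𝓘p.filter (fun A => ¬ ∃ s ∈ S, A = Vs S T F₀ s) with h𝓙
    have hsplit : ∑ A ∈ 𝓘p, p₁ S T F₀ rS pT m A
        = ∑ A ∈ 𝓥, p₁ S T F₀ rS pT m A + ∑ A ∈ 𝓙, p₁ S T F₀ rS pT m A :=
      (Finset.sum_filter_add_sum_filter_not 𝓘p (fun A => ∃ s ∈ S, A = Vs S T F₀ s) _).symm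
    set S₁ := S.filter (fun s => Vs S T F₀ s ∈ 𝓥) with hS₁def
    have hS₁S : S₁ ⊆ S := Finset.filter_subset _ _
    -- 𝓥-sum equals ∑_{S₁} m
    have hVsum : ∑ A ∈ 𝓥, p₁ S T F₀ rS pT m A = ∑ s ∈ S₁, m s := by
      have hfib := Finset.sum_fiberwise_of_maps_to (g := Vs S T F₀) (t := 𝓥)
        (fun s hs => (Finset.mem_filter.mp hs).2 : ∀ s ∈ S₁, Vs S T F₀ s ∈ 𝓥) m
      rw [← hfib]
      apply Finset.sum_congr rfl
      intro A hA
      have hex := (Finset.mem_filter.mp hA).2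
      unfold p₁
      rw [if_pos hex]
      apply Finset.sum_congr _ (fun _ _ => rfl)
      ext t
      simp only [Finset.mem_filter, hS₁def]
      constructor
      · rintro ⟨htS, hEq⟩
        exact ⟨⟨htS, by rw [← hEq]; exact hA⟩, hEq.symm⟩
      · rintro ⟨⟨htS, _⟩, hEq⟩
        exact ⟨htS, hEq.symm⟩
    -- facts about members of 𝓙
    have hJfacts : ∀ A ∈ 𝓙, A ∈ 𝓘 ∧ (¬ ∃ s ∈ S, A = Vs S T F₀ s)
        ∧ 0 < p₀ S T F₀ rS pT m A := by
      intro A hA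
      obtain ⟨hA1, hA2⟩ := Finset.mem_filter.mp hA
      obtain ⟨hA3, hA4⟩ := Finset.mem_filter.mp hA1
      refine ⟨hA3, hA2, ?_⟩
      have : p₁ S T F₀ rS pT m A = p₀ S T F₀ rS pT m A := by
        unfold p₁; rw [if_neg hA2]
      rw [← this]
      exact hA4
    have hJP : ∀ A ∈ 𝓙, A ⊆ S ∪ T ∧ memH₀ F₀ A := by
      intro A hA
      by_contra h
      have hp := (hJfacts A hA).2.2
      unfold p₀ at hp
      rw [if_neg h] at hp
      exact lt_irrefl 0 hp
    have hJne : ∀ A ∈ 𝓙, (A ∩ T).Nonempty := by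
      intro A hA
      by_contra hne
      have hp := (hJfacts A hA).2.2
      unfold p₀ at hp
      rw [if_pos (hJP A hA), Finset.not_nonempty_iff_eq_empty.mp hne] at hp
      simp at hp
    -- the branch choice
    set β : Finset α → Bool := fun A =>
      decide (¬ ((A ∩ T).card = 1 ∧ pT (A ∩ T) - (rS (A ∩ S) : ℤ) <
        (∑ y ∈ A ∩ T, m y) - ((A ∩ S).card : ℤ) + ∑ y ∈ A ∩ T, (degT F₀ y : ℤ))) with hβdef
    have hβtrue : ∀ A, β A = true ↔ ¬ ((A ∩ T).card = 1 ∧ pT (A ∩ T) - (rS (A ∩ S) : ℤ) <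
        (∑ y ∈ A ∩ T, m y) - ((A ∩ S).card : ℤ) + ∑ y ∈ A ∩ T, (degT F₀ y : ℤ)) := by
      intro A
      rw [hβdef]
      exact decide_eq_true_iff
    have hβfalse : ∀ A, β A = false ↔ ((A ∩ T).card = 1 ∧ pT (A ∩ T) - (rS (A ∩ S) : ℤ) <
        (∑ y ∈ A ∩ T, m y) - ((A ∩ S).card : ℤ) + ∑ y ∈ A ∩ T, (degT F₀ y : ℤ)) := by
      intro A
      rw [← Bool.not_eq_true, hβtrue]
      exact not_not
    have hβcard : ∀ A ∈ 𝓙, β A = false → (A ∩ T).card = 1 :=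
      fun A _ h => ((hβfalse A).mp h).1
    -- uw agrees with p₀ on 𝓙
    have huwp : ∀ A ∈ 𝓙, uw S T F₀ rS pT m β A = p₀ S T F₀ rS pT m A := by
      intro A hA
      unfold p₀
      rw [if_pos (hJP A hA)]
      by_cases h1 : (A ∩ T).card = 1
      · rw [if_pos h1]
        by_cases h2 : pT (A ∩ T) - (rS (A ∩ S) : ℤ) <
            (∑ y ∈ A ∩ T, m y) - ((A ∩ S).card : ℤ) + ∑ y ∈ A ∩ T, (degT F₀ y : ℤ)
        · have hβA : β A = false := (hβfalse A).mpr ⟨h1, h2⟩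
          unfold uw
          rw [if_neg (by rw [hβA]; exact Bool.false_ne_true),
            max_eq_right (le_of_lt h2)]
        · have hβA : β A = true := (hβtrue A).mpr (fun h => h2 h.2)
          unfold uw
          rw [if_pos hβA, max_eq_left (not_lt.mp h2)]
      · rw [if_neg h1]
        have hc2 : 2 ≤ (A ∩ T).card := by
          have := Finset.card_pos.mpr (hJne A hA)
          omega
        rw [if_pos hc2]
        have hβA : β A = true := (hβtrue A).mpr (fun h => h1 h.1)
        unfold uw
        rw [if_pos hβA]
    -- no member of 𝓙 contains S
    have hXne : ∀ A ∈ 𝓙, ¬ S ⊆ A := by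
      intro A hA hSA
      have hp := (hJfacts A hA).2.2
      have hAS : A ∩ S = S := Finset.inter_eq_right.mpr hSA
      have hb1 : pT (A ∩ T) - (rS (A ∩ S) : ℤ) ≤ 0 := by
        rw [hAS]
        have := pT_le_rank hF₀ hγS hstar (Finset.inter_subset_right : A ∩ T ⊆ T) (hJne A hA)
        linarith
      unfold p₀ at hp
      rw [if_pos (hJP A hA)] at hp
      by_cases h1 : (A ∩ T).card = 1
      · rw [if_pos h1] at hp
        obtain ⟨y, hy⟩ := Finset.card_eq_one.mp h1
        have hyT : y ∈ T := by
          have : y ∈ A ∩ T := by rw [hy]; exact Finset.mem_singleton_self y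
          exact (Finset.mem_inter.mp this).2
        have hb2 : (∑ y ∈ A ∩ T, m y) - ((A ∩ S).card : ℤ)
            + ∑ y ∈ A ∩ T, (degT F₀ y : ℤ) ≤ 0 := by
          rw [hy, hAS]
          simp only [Finset.sum_singleton]
          have := m_add_deg_le hF₀ hγS hstar hyT
          linarith
        exact absurd hp (not_lt.mpr (max_le hb1 hb2))
      · rw [if_neg h1] at hp
        have hc2 : 2 ≤ (A ∩ T).card := by
          have := Finset.card_pos.mpr (hJne A hA)
          omega
        rw [if_pos hc2] at hp
        linarith
    -- S₁ is contained in every member of 𝓙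
    have hS₁A : ∀ A ∈ 𝓙, S₁ ⊆ A := by
      intro A hA s hs
      obtain ⟨hsS, hsV⟩ := Finset.mem_filter.mp hs
      have hV𝓘 : Vs S T F₀ s ∈ 𝓘 := h𝓘p𝓘 (Finset.filter_subset _ _ hsV)
      have hne : A ≠ Vs S T F₀ s := by
        intro h
        exact (hJfacts A hA).2.1 ⟨s, hsS, h⟩
      rcases hind A (hJfacts A hA).1 (Vs S T F₀ s) hV𝓘 hne with h | h
      · obtain ⟨y, hy⟩ := hJne A hA
        obtain ⟨hyA, hyT⟩ := Finset.mem_inter.mp hy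
        have hyV : y ∉ Vs S T F₀ s := by
          intro hyV
          have : y ∈ A ∩ Vs S T F₀ s ∩ T :=
            Finset.mem_inter.mpr ⟨Finset.mem_inter.mpr ⟨hyA, hyV⟩, hyT⟩
          rw [h] at this
          exact absurd this (Finset.notMem_empty y)
        have hsy : (s, y) ∈ F₀ := by
          by_contra hsy
          apply hyV
          apply mem_Vs.mpr
          refine ⟨Finset.mem_union_right _ hyT, ?_, hsy⟩
          intro heq
          exact (Finset.disjoint_left.mp hST hsS) (heq ▸ hyT)
        exact (hJP A hA).2 (s, y) hsy hyA
      · have hsV' : s ∉ Vs S T F₀ s := by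
          intro h'
          exact (mem_Vs.mp h').2.1 rfl
        rcases Finset.mem_union.mp (h hsS) with h' | h'
        · exact h'
        · exact absurd h' hsV'
    -- apply the core lemma
    have hcore := core hF₀ hrS hpT hγS hstar 𝓙.card 𝓙 (le_refl _) β S₁ hS₁S
      (fun A hA => (hJP A hA).2) hJne hS₁A hXne hβcard
      (by intro A hA
          rw [huwp A hA]
          exact (hJfacts A hA).2.2)
      (by intro A hA B hB hne
          exact hind A (hJfacts A hA).1 B (hJfacts B hB).1 hne)
    have hJsum : ∑ A ∈ 𝓙, uw S T F₀ rS pT m β A = ∑ A ∈ 𝓙, p₁ S T F₀ rS pT m A := by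
      apply Finset.sum_congr rfl
      intro A hA
      rw [huwp A hA]
      unfold p₁
      rw [if_neg (hJfacts A hA).2.1]
    rw [hJsum] at hcore
    linarith
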